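/- Let t1 ∈ (0, t1*) and T = T(t1), and set c(t1) = cos²(ω_max·t1)·(1 − (ω_max²/ω_min²)·tan²(ω_max·t1)). Then c(t1) > 0 and the explicit trajectory satisfies √(c(t1)) ≤ x*(t) ≤ 1 for every t ∈ [0, T], with x*(0) = x*(T) = 1 (the maximal value) and x*(T/2) = √(c(t1)) (the minimal value); in particular 0 < x*(t) ≤ 1 on [0, T]. Moreover x*(t)² + y*(t)²/ω_max² = 1 for every t ∈ [0, t1] ∪ [T − t1, T] (arc of ellipse), and x*(t)² − y*(t)²/ω_min² = c(t1) for every t ∈ [t1, T − t1] (arc of hyperbola). -/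

import Mathlib

open MeasureTheory Real Set Filter Topology

noncomputable section

/-- `t1* = (1/ω_max)·Arctan(ω_min/ω_max)` with `ω_min = √(−u_min)`, `ω_max = √u_max`. -/
def OCt1star (umin umax : ℝ) : ℝ :=
  (1 / Real.sqrt umax) * Real.arctan (Real.sqrt (-umin) / Real.sqrt umax)

/-- The period `T(t1)`. -/
def OCT (umin umax t1 : ℝ) : ℝ :=
  (1 / Real.sqrt (-umin)) *
    Real.log ((1 + (Real.sqrt umax / Real.sqrt (-umin)) * Real.tan (Real.sqrt umax * t1)) /
              (1 - (Real.sqrt umax / Real.sqrt (-umin)) * Real.tan (Real.sqrt umax * t1)))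
  + 2 * t1

/-- The optimal cost `C(t1) = 2·t1·u_max + (T(t1) − 2·t1)·u_min`. -/
def OCC (umin umax t1 : ℝ) : ℝ := 2 * t1 * umax + (OCT umin umax t1 - 2 * t1) * umin

/-- The explicit bang-bang control `u*` on `[0, T]`. -/
def OCustar (umin umax t1 T : ℝ) (t : ℝ) : ℝ :=
  if t1 < t ∧ t < T - t1 then umin else umax

/-- The explicit trajectory `x*` on `[0, T]`. -/
def OCxstar (umin umax t1 T : ℝ) (t : ℝ) : ℝ :=
  if t ≤ t1 then Real.cos (Real.sqrt umax * t)
  else if t ≤ T - t1 then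
    Real.cos (Real.sqrt umax * t1) * Real.cosh (Real.sqrt (-umin) * (t - t1))
      - (Real.sqrt umax / Real.sqrt (-umin)) * Real.sin (Real.sqrt umax * t1) *
        Real.sinh (Real.sqrt (-umin) * (t - t1))
  else Real.cos (Real.sqrt umax * (T - t))

set_option maxHeartbeats 2000000

lemma OCaux_amgm {p q : ℝ} (hp : 0 ≤ p) (hq : 0 ≤ q) : 2 * Real.sqrt (p*q) ≤ p + q := by
  rw [Real.sqrt_mul hp]
  nlinarith [sq_nonneg (Real.sqrt p - Real.sqrt q), Real.sq_sqrt hp, Real.sq_sqrt hq]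

lemma OCaux_g_ge {k : ℝ} (hk0 : 0 ≤ k) (hk1 : k ≤ 1) (s : ℝ) :
    Real.sqrt (1 - k^2) ≤ Real.cosh s - k * Real.sinh s := by
  have hp : 0 ≤ (1-k) * Real.exp s := mul_nonneg (by linarith) (Real.exp_pos s).le
  have hq : 0 ≤ (1+k) * Real.exp (-s) := mul_nonneg (by linarith) (Real.exp_pos _).le
  have hpq : ((1-k) * Real.exp s) * ((1+k) * Real.exp (-s)) = 1 - k^2 := by
    rw [Real.exp_neg]
    field_simp [Real.exp_ne_zero s]
    ring
  have hg : Real.cosh s - k * Real.sinh s = ((1-k)*Real.exp s + (1+k)*Real.exp (-s))/2 := by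
    rw [Real.cosh_eq, Real.sinh_eq]; ring
  have h := OCaux_amgm hp hq
  rw [hpq] at h
  rw [hg]; linarith

lemma OCaux_g_le {k s : ℝ} (hk1 : k ≤ 1) (hs : 0 ≤ s)
    (hsL : Real.exp s * (1-k) ≤ 1 + k) :
    Real.cosh s - k * Real.sinh s ≤ 1 := by
  have hw : 0 < Real.exp s := Real.exp_pos s
  have hw1 : 1 ≤ Real.exp s := Real.one_le_exp hs
  have hG : Real.cosh s - k*Real.sinh s = ((1-k)*Real.exp s + (1+k)*(Real.exp s)⁻¹)/2 := by
    rw [Real.cosh_eq, Real.sinh_eq, Real.exp_neg]; ring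
  rw [hG, div_le_one (by norm_num : (0:ℝ) < 2), ← sub_nonneg]
  have key : 2 - ((1-k)*Real.exp s + (1+k)*(Real.exp s)⁻¹)
      = (Real.exp s - 1) * ((1+k) - Real.exp s * (1-k)) / Real.exp s := by
    field_simp
    ring
  rw [key]
  exact div_nonneg (mul_nonneg (by linarith) (by linarith)) hw.le

lemma OCaux_coshL {k L : ℝ} (hk0 : 0 ≤ k) (hk1 : k < 1)
    (hL : Real.exp L = (1+k)/(1-k)) :
    Real.cosh L = (1+k^2)/(1-k^2) ∧ Real.sinh L = 2*k/(1-k^2) := by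
  have h1 : (0:ℝ) < 1-k := by linarith
  have h2 : (0:ℝ) < 1+k := by linarith
  have h3 : (0:ℝ) < 1-k^2 := by nlinarith
  have hinv : Real.exp (-L) = (1-k)/(1+k) := by rw [Real.exp_neg, hL, inv_div]
  constructor
  · rw [Real.cosh_eq, hL, hinv]; field_simp [h1.ne', h2.ne', h3.ne']; ring
  · rw [Real.sinh_eq, hL, hinv]; field_simp [h1.ne', h2.ne', h3.ne']; ring

lemma OCaux_g_half {k L : ℝ} (hk0 : 0 ≤ k) (hk1 : k < 1)
    (hL : Real.exp L = (1+k)/(1-k)) :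
    Real.cosh (L/2) - k * Real.sinh (L/2) = Real.sqrt (1-k^2) := by
  have h1 : (0:ℝ) < 1-k := by linarith
  have h2 : (0:ℝ) < 1+k := by linarith
  have hE : 0 < Real.exp (L/2) := Real.exp_pos _
  have hEL : Real.exp (L/2)^2 = Real.exp L := by rw [sq, ← Real.exp_add, add_halves]
  have hE2 : (1-k) * Real.exp (L/2)^2 = 1+k := by
    rw [hEL, hL]; field_simp
  have hval : Real.cosh (L/2) - k * Real.sinh (L/2) = (1+k)/Real.exp (L/2) := by
    rw [Real.cosh_eq, Real.sinh_eq, Real.exp_neg]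
    field_simp
    linear_combination hE2
  rw [hval]
  have hsq : ((1+k)/Real.exp (L/2))^2 = 1-k^2 := by
    rw [div_pow]
    rw [show Real.exp (L/2)^2 = (1+k)/(1-k) from by rw [hEL, hL]]
    field_simp
    ring
  rw [← hsq, Real.sqrt_sq (by positivity)]

/-- Bounds and conic identities for the explicit trajectory: with
`c(t1) = cos²(ω_max·t1)·(1 − (ω_max²/ω_min²)·tan²(ω_max·t1)) > 0`, one has
`√(c(t1)) ≤ x*(t) ≤ 1` on `[0, T]`, with extremal values `x*(0) = x*(T) = 1` and
`x*(T/2) = √(c(t1))`; moreover `x*² + y*²/ω_max² = 1` on `[0, t1] ∪ [T − t1, T]`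
(ellipse) and `x*² − y*²/ω_min² = c(t1)` on `[t1, T − t1]` (hyperbola). -/
theorem explicit_trajectory_bounds_and_conics (umin umax : ℝ)
    (humin : umin < 0) (humax : 0 < umax)
    (t1 : ℝ) (ht1 : t1 ∈ Ioo 0 (OCt1star umin umax)) (T : ℝ) (hT : T = OCT umin umax t1)
    (c : ℝ) (hc : c = Real.cos (Real.sqrt umax * t1) ^ 2 *
      (1 - (Real.sqrt umax ^ 2 / Real.sqrt (-umin) ^ 2) *
        Real.tan (Real.sqrt umax * t1) ^ 2)) :
    0 < c ∧
    (∀ t ∈ Icc (0:ℝ) T, Real.sqrt c ≤ OCxstar umin umax t1 T t ∧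
      OCxstar umin umax t1 T t ≤ 1) ∧
    (∀ t ∈ Icc (0:ℝ) T, 0 < OCxstar umin umax t1 T t) ∧
    OCxstar umin umax t1 T 0 = 1 ∧ OCxstar umin umax t1 T T = 1 ∧
    OCxstar umin umax t1 T (T / 2) = Real.sqrt c ∧
    (∀ t ∈ Icc (0:ℝ) t1 ∪ Icc (T - t1) T,
      OCxstar umin umax t1 T t ^ 2 +
        deriv (OCxstar umin umax t1 T) t ^ 2 / Real.sqrt umax ^ 2 = 1) ∧
    (∀ t ∈ Icc t1 (T - t1),
      OCxstar umin umax t1 T t ^ 2 -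
        deriv (OCxstar umin umax t1 T) t ^ 2 / Real.sqrt (-umin) ^ 2 = c) := by
  have humin' : (0:ℝ) < -umin := by linarith
  set a := Real.sqrt umax with ha_def
  set b := Real.sqrt (-umin) with hb_def
  have ha : 0 < a := Real.sqrt_pos.2 humax
  have hb : 0 < b := Real.sqrt_pos.2 humin'
  obtain ⟨ht1pos, ht1lt⟩ := ht1
  rw [OCt1star, ← ha_def, ← hb_def] at ht1lt
  -- basic angle facts
  have harct : a * t1 < Real.arctan (b/a) := by
    calc a * t1 < a * (1/a * Real.arctan (b/a)) := by exact mul_lt_mul_of_pos_left ht1lt ha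
      _ = Real.arctan (b/a) := by field_simp
  have hat_pos : 0 < a * t1 := mul_pos ha ht1pos
  have hat_lt : a * t1 < π/2 := harct.trans (Real.arctan_lt_pi_div_two _)
  have hC : 0 < Real.cos (a*t1) :=
    Real.cos_pos_of_mem_Ioo ⟨by linarith [Real.pi_pos], hat_lt⟩
  have htan_pos : 0 < Real.tan (a*t1) := Real.tan_pos_of_pos_of_lt_pi_div_two hat_pos hat_lt
  have htan_lt : Real.tan (a*t1) < b/a := by
    have h := Real.tan_lt_tan_of_nonneg_of_lt_pi_div_two hat_pos.le
      (Real.arctan_lt_pi_div_two (b/a)) harct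
    rwa [Real.tan_arctan] at h
  set k := a/b * Real.tan (a*t1) with hk_def
  have hk0 : 0 < k := mul_pos (div_pos ha hb) htan_pos
  have hk1 : k < 1 := by
    have h1 : a/b * Real.tan (a*t1) < a/b * (b/a) := mul_lt_mul_of_pos_left htan_lt (div_pos ha hb)
    have h2 : a/b*(b/a) = 1 := by field_simp
    rw [hk_def]; linarith
  have hD : 0 < 1 - k^2 := by nlinarith
  clear_value k
  have hc' : c = Real.cos (a*t1)^2 * (1 - k^2) := by
    rw [hc, hk_def]; ring
  have hcpos : 0 < c := by rw [hc']; exact mul_pos (pow_pos hC 2) hD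
  have hsqrtc : Real.sqrt c = Real.cos (a*t1) * Real.sqrt (1-k^2) := by
    rw [hc', Real.sqrt_mul (sq_nonneg _), Real.sqrt_sq hC.le]
  have haS : a * Real.sin (a*t1) = b * k * Real.cos (a*t1) := by
    rw [hk_def, Real.tan_eq_sin_div_cos]
    field_simp
  -- L and T facts
  set L := Real.log ((1+k)/(1-k)) with hL_def
  have hfrac : (1:ℝ) < (1+k)/(1-k) := by rw [lt_div_iff₀ (by linarith)]; linarith
  have hL0 : 0 < L := Real.log_pos hfrac
  have hexpL : Real.exp L = (1+k)/(1-k) := Real.exp_log (by positivity)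
  have hT' : T = L/b + 2*t1 := by
    rw [hT, OCT, ← ha_def, ← hb_def, ← hk_def, ← hL_def]; ring
  have hTt1 : t1 < T - t1 := by
    have := div_pos hL0 hb; linarith
  have hbT : b * (T - t1 - t1) = L := by rw [hT']; field_simp; ring
  obtain ⟨hcoshL, hsinhL⟩ := OCaux_coshL hk0.le hk1 hexpL
  -- evaluation of the three branches
  have hmid : ∀ s : ℝ, Real.cos (a*t1) * Real.cosh s - a/b * Real.sin (a*t1) * Real.sinh s
      = Real.cos (a*t1) * (Real.cosh s - k * Real.sinh s) := by
    intro s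
    have h : a/b * Real.sin (a*t1) = k * Real.cos (a*t1) := by
      rw [hk_def, Real.tan_eq_sin_div_cos]; field_simp
    rw [h]; ring
  have hX1 : ∀ t, t ≤ t1 → OCxstar umin umax t1 T t = Real.cos (a*t) := by
    intro t ht; rw [OCxstar, ← ha_def, if_pos ht]
  have hX2 : ∀ t, t1 < t → t ≤ T - t1 → OCxstar umin umax t1 T t
      = Real.cos (a*t1) * (Real.cosh (b*(t-t1)) - k * Real.sinh (b*(t-t1))) := by
    intro t ht ht'
    rw [OCxstar, ← ha_def, ← hb_def, if_neg (not_le.2 ht), if_pos ht', hmid]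
  have hX3 : ∀ t, T - t1 < t → OCxstar umin umax t1 T t = Real.cos (a*(T-t)) := by
    intro t ht
    rw [OCxstar, ← ha_def, if_neg (not_le.2 (hTt1.trans ht)), if_neg (not_le.2 ht)]
  -- derivatives of the three model functions
  have hcos_deriv : ∀ t : ℝ, HasDerivAt (fun s => Real.cos (a*s)) (-a * Real.sin (a*t)) t := by
    intro t
    have hi : HasDerivAt (fun s : ℝ => a*s) a t := by
      simpa using (hasDerivAt_id t).const_mul a
    have h := hi.cos
    convert h using 1
    ring
  have hmid_deriv : ∀ t : ℝ, HasDerivAt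
      (fun s => Real.cos (a*t1) * (Real.cosh (b*(s-t1)) - k * Real.sinh (b*(s-t1))))
      (Real.cos (a*t1) * b * (Real.sinh (b*(t-t1)) - k * Real.cosh (b*(t-t1)))) t := by
    intro t
    have hi : HasDerivAt (fun s : ℝ => b*(s-t1)) b t := by
      simpa using ((hasDerivAt_id t).sub_const t1).const_mul b
    have h := ((hi.cosh).sub ((hi.sinh).const_mul k)).const_mul (Real.cos (a*t1))
    refine h.congr_deriv ?_
    ring
  have hcos3_deriv : ∀ t : ℝ, HasDerivAt (fun s => Real.cos (a*(T-s))) (a * Real.sin (a*(T-t))) t := by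
    intro t
    have hi : HasDerivAt (fun s : ℝ => a*(T-s)) (-a) t := by
      simpa using ((hasDerivAt_id t).const_sub T).const_mul a
    have h := hi.cos
    convert h using 1
    ring
  -- derivatives of OCxstar
  have hXd1 : ∀ t, t < t1 → HasDerivAt (OCxstar umin umax t1 T) (-a * Real.sin (a*t)) t := by
    intro t ht
    apply (hcos_deriv t).congr_of_eventuallyEq
    filter_upwards [Iio_mem_nhds ht] with s hs
    exact hX1 s hs.le
  have hXd2 : ∀ t, t1 < t → t < T - t1 → HasDerivAt (OCxstar umin umax t1 T)
      (Real.cos (a*t1) * b * (Real.sinh (b*(t-t1)) - k * Real.cosh (b*(t-t1)))) t := by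
    intro t ht ht'
    apply (hmid_deriv t).congr_of_eventuallyEq
    filter_upwards [Ioo_mem_nhds ht ht'] with s hs
    exact hX2 s hs.1 hs.2.le
  have hXd3 : ∀ t, T - t1 < t → HasDerivAt (OCxstar umin umax t1 T) (a * Real.sin (a*(T-t))) t := by
    intro t ht
    apply (hcos3_deriv t).congr_of_eventuallyEq
    filter_upwards [Ioi_mem_nhds ht] with s hs
    exact hX3 s hs
  have hXd_t1 : HasDerivAt (OCxstar umin umax t1 T) (-a * Real.sin (a*t1)) t1 := by
    have hleft : HasDerivWithinAt (OCxstar umin umax t1 T) (-a * Real.sin (a*t1)) (Iic t1) t1 := by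
      refine ((hcos_deriv t1).hasDerivWithinAt).congr ?_ ?_
      · intro s hs; exact hX1 s hs
      · exact hX1 t1 le_rfl
    have hright : HasDerivWithinAt (OCxstar umin umax t1 T) (-a * Real.sin (a*t1)) (Icc t1 (T-t1)) t1 := by
      have h0 : Real.cos (a*t1) * b * (Real.sinh (b*(t1-t1)) - k * Real.cosh (b*(t1-t1)))
          = -a * Real.sin (a*t1) := by
        rw [sub_self, mul_zero, Real.sinh_zero, Real.cosh_zero]
        linear_combination haS
      have h := (hmid_deriv t1).hasDerivWithinAt (s := Icc t1 (T-t1))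
      rw [h0] at h
      refine h.congr ?_ ?_
      · intro s hs
        rcases eq_or_lt_of_le hs.1 with h1 | h1
        · rw [← h1, hX1 t1 le_rfl, sub_self, mul_zero, Real.sinh_zero, Real.cosh_zero,
            mul_zero, sub_zero, mul_one]
        · exact hX2 s h1 hs.2
      · rw [hX1 t1 le_rfl, sub_self, mul_zero, Real.sinh_zero, Real.cosh_zero,
          mul_zero, sub_zero, mul_one]
    have h := hleft.union hright
    rw [Set.Iic_union_Icc_eq_Iic hTt1.le] at h
    exact h.hasDerivAt (Iic_mem_nhds hTt1)
  have hone : (1+k^2)/(1-k^2) - k*(2*k/(1-k^2)) = 1 := by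
    field_simp
    ring
  have htwo : 2*k/(1-k^2) - k*((1+k^2)/(1-k^2)) = k := by
    field_simp
    ring
  have hXval_Tt1 : OCxstar umin umax t1 T (T-t1) = Real.cos (a*t1) := by
    rw [hX2 (T-t1) hTt1 le_rfl, hbT, hcoshL, hsinhL, hone, mul_one]
  have hXd_Tt1 : HasDerivAt (OCxstar umin umax t1 T) (a * Real.sin (a*t1)) (T-t1) := by
    have hval : Real.cos (a*t1) * b * (Real.sinh (b*(T-t1-t1)) - k * Real.cosh (b*(T-t1-t1)))
        = a * Real.sin (a*t1) := by
      rw [hbT, hcoshL, hsinhL, haS, htwo]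
      ring
    have hleft : HasDerivWithinAt (OCxstar umin umax t1 T) (a * Real.sin (a*t1)) (Icc t1 (T-t1)) (T-t1) := by
      have h := (hmid_deriv (T-t1)).hasDerivWithinAt (s := Icc t1 (T-t1))
      rw [hval] at h
      refine h.congr ?_ ?_
      · intro s hs
        rcases eq_or_lt_of_le hs.1 with h1 | h1
        · rw [← h1, hX1 t1 le_rfl, sub_self, mul_zero, Real.sinh_zero, Real.cosh_zero,
            mul_zero, sub_zero, mul_one]
        · exact hX2 s h1 hs.2
      · exact hX2 (T-t1) hTt1 le_rfl
    have hright : HasDerivWithinAt (OCxstar umin umax t1 T) (a * Real.sin (a*t1)) (Ici (T-t1)) (T-t1) := by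
      have h := (hcos3_deriv (T-t1)).hasDerivWithinAt (s := Ici (T-t1))
      rw [show T-(T-t1) = t1 from by ring] at h
      refine h.congr ?_ ?_
      · intro s hs
        rcases eq_or_lt_of_le (Set.mem_Ici.1 hs) with h1 | h1
        · rw [← h1, hXval_Tt1, show T-(T-t1) = t1 from by ring]
        · exact hX3 s h1
      · rw [hXval_Tt1, show T-(T-t1) = t1 from by ring]
    have h := hleft.union hright
    rw [Set.Icc_union_Ici_eq_Ici hTt1.le] at h
    exact h.hasDerivAt (Ici_mem_nhds hTt1)
  -- bounds
  have hsD1 : Real.sqrt (1-k^2) ≤ 1 := Real.sqrt_le_one.2 (by nlinarith)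
  have hbounds : ∀ t ∈ Icc (0:ℝ) T, Real.sqrt c ≤ OCxstar umin umax t1 T t ∧
      OCxstar umin umax t1 T t ≤ 1 := by
    rintro t ⟨ht0, htT⟩
    rcases le_or_gt t t1 with h1 | h1
    · rw [hX1 t h1]
      constructor
      · calc Real.sqrt c = Real.cos (a*t1) * Real.sqrt (1-k^2) := hsqrtc
          _ ≤ Real.cos (a*t1) * 1 := mul_le_mul_of_nonneg_left hsD1 hC.le
          _ = Real.cos (a*t1) := mul_one _
          _ ≤ Real.cos (a*t) := Real.cos_le_cos_of_nonneg_of_le_pi (mul_nonneg ha.le ht0)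
              (by linarith [Real.pi_pos]) (mul_le_mul_of_nonneg_left h1 ha.le)
      · exact Real.cos_le_one _
    · rcases le_or_gt t (T-t1) with h2 | h2
      · rw [hX2 t h1 h2]
        have hs0 : 0 ≤ b*(t-t1) := mul_nonneg hb.le (by linarith)
        have hsL : b*(t-t1) ≤ L := by
          rw [← hbT]; exact mul_le_mul_of_nonneg_left (by linarith) hb.le
        have hexple : Real.exp (b*(t-t1)) * (1-k) ≤ 1+k := by
          have h3 : Real.exp (b*(t-t1)) ≤ (1+k)/(1-k) := by
            rw [← hexpL]; exact Real.exp_le_exp.2 hsL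
          rw [← le_div_iff₀ (by linarith : (0:ℝ) < 1-k)] at *
          linarith
        constructor
        · rw [hsqrtc]
          exact mul_le_mul_of_nonneg_left (OCaux_g_ge hk0.le hk1.le _) hC.le
        · calc Real.cos (a*t1) * (Real.cosh (b*(t-t1)) - k*Real.sinh (b*(t-t1)))
              ≤ Real.cos (a*t1) * 1 :=
                mul_le_mul_of_nonneg_left (OCaux_g_le hk1.le hs0 hexple) hC.le
            _ ≤ 1 := by rw [mul_one]; exact Real.cos_le_one _
      · rw [hX3 t h2]
        constructor
        · calc Real.sqrt c = Real.cos (a*t1) * Real.sqrt (1-k^2) := hsqrtc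
            _ ≤ Real.cos (a*t1) * 1 := mul_le_mul_of_nonneg_left hsD1 hC.le
            _ = Real.cos (a*t1) := mul_one _
            _ ≤ Real.cos (a*(T-t)) := Real.cos_le_cos_of_nonneg_of_le_pi
                (mul_nonneg ha.le (by linarith)) (by linarith [Real.pi_pos])
                (mul_le_mul_of_nonneg_left (by linarith) ha.le)
        · exact Real.cos_le_one _
  refine ⟨hcpos, hbounds, ?_, ?_, ?_, ?_, ?_, ?_⟩
  · intro t ht
    exact lt_of_lt_of_le (Real.sqrt_pos.2 hcpos) (hbounds t ht).1
  · rw [hX1 0 ht1pos.le, mul_zero, Real.cos_zero]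
  · rw [hX3 T (by linarith), sub_self, mul_zero, Real.cos_zero]
  · have hhalf1 : t1 < T/2 := by linarith
    have hhalf2 : T/2 ≤ T - t1 := by linarith
    rw [hX2 _ hhalf1 hhalf2, show b * (T/2 - t1) = L/2 from by rw [hT']; field_simp; ring,
      OCaux_g_half hk0.le hk1 hexpL, hsqrtc]
  · -- ellipse
    intro t ht
    rcases ht with ⟨ht0, htt1⟩ | ⟨ht1', htT⟩
    · rcases lt_or_eq_of_le htt1 with h | h
      · rw [hX1 t htt1, (hXd1 t h).deriv]
        field_simp
        linear_combination Real.sin_sq_add_cos_sq (a*t)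
      · subst h
        rw [hX1 t le_rfl, hXd_t1.deriv]
        field_simp
        linear_combination Real.sin_sq_add_cos_sq (a*t)
    · rcases eq_or_lt_of_le ht1' with h | h
      · rw [← h, hXval_Tt1, hXd_Tt1.deriv]
        field_simp
        linear_combination Real.sin_sq_add_cos_sq (a*t1)
      · rw [hX3 t h, (hXd3 t h).deriv]
        field_simp
        linear_combination Real.sin_sq_add_cos_sq (a*(T-t))
  · -- hyperbola
    rintro t ⟨htl, htr⟩
    rcases eq_or_lt_of_le htl with h | h
    · rw [← h, hX1 t1 le_rfl, hXd_t1.deriv, hc']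
      field_simp
      linear_combination (-(a * Real.sin (a*t1) + b*k*Real.cos (a*t1))) * haS
    · rcases eq_or_lt_of_le htr with h2 | h2
      · rw [h2, hXval_Tt1, hXd_Tt1.deriv, hc']
        field_simp
        linear_combination (-(a * Real.sin (a*t1) + b*k*Real.cos (a*t1))) * haS
      · rw [hX2 t h h2.le, (hXd2 t h h2).deriv, hc']
        have hch := Real.cosh_sq_sub_sinh_sq (b*(t-t1))
        field_simp
        linear_combination (1-k^2) * hch


end
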